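/- In the Motzkin–Straus setting, if G is a graph with clique number t and K is a fixed clique of order t, then the vector x with x_i = 1/t for i ∈ K and x_i = 0 otherwise achieves the maximum λ(G) = (1/2)(1 - 1/t) of λ(G, ·) over the standard simplex. -/

import Mathlib

open Finset

def stdSimplex' (n : ℕ) : Set (Fin n → ℝ) :=
  {x | (∀ i, 0 ≤ x i) ∧ ∑ i, x i = 1}

lemma pairSum {n : ℕ} (s : Finset (Fin n)) (x : Fin n → ℝ) :
    2 * ∑ e ∈ s.powersetCard 2, ∏ i ∈ e, x i
      = (∑ i ∈ s, x i)^2 - ∑ i ∈ s, (x i)^2 := by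
  induction s using Finset.induction with
  | empty => rw [powersetCard_eq_empty.2 (by simp)]; simp
  | @insert a s ha ih =>
    rw [powersetCard_succ_insert ha, sum_union]
    · rw [sum_image ?inj]
      case inj =>
        intro e he e' he' hee
        simp only [mem_coe, mem_powersetCard] at he he'
        have h1 : a ∉ e := fun h => ha (he.1 h)
        have h1' : a ∉ e' := fun h => ha (he'.1 h)
        rw [← erase_insert h1, ← erase_insert h1', hee]
      rw [powersetCard_one, sum_map]
      simp only [Function.Embedding.coeFn_mk, sum_insert_of_eq_zero_if_notMem]
      have hsing : ∀ i ∈ s, ∏ m ∈ insert a {i}, x m = x a * x i := by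
        intro i hi
        rw [prod_insert (by simp; rintro rfl; exact ha hi), prod_singleton]
      rw [sum_congr rfl hsing, ← mul_sum, sum_insert ha, sum_insert ha]
      ring_nf
      nlinarith [ih]
    · rw [disjoint_left]
      intro e he he'
      simp only [mem_image] at he'
      obtain ⟨e', he', rfl⟩ := he'
      simp only [mem_powersetCard] at he
      exact ha (he.1 (mem_insert_self a e'))

lemma decomp {n : ℕ} (E : Finset (Finset (Fin n))) (hE : ∀ e ∈ E, e.card = 2)
    {i j : Fin n} (hij : i ≠ j) (hnotE : ({i, j} : Finset (Fin n)) ∉ E)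
    (x : Fin n → ℝ) :
    ∃ A B C : ℝ, ∀ u : Fin n → ℝ, (∀ m, m ≠ i → m ≠ j → u m = x m) →
      ∑ e ∈ E, ∏ m ∈ e, u m = u i * A + u j * B + C := by
  classical
  -- no edge contains both i and j
  have hboth : ∀ e ∈ E, i ∈ e → j ∈ e → False := by
    intro e he hi hj
    have hsub : ({i, j} : Finset (Fin n)) ⊆ e := by
      intro m hm; simp only [mem_insert, mem_singleton] at hm
      rcases hm with rfl | rfl <;> assumption
    have : ({i, j} : Finset (Fin n)) = e :=
      eq_of_subset_of_card_le hsub (by rw [hE e he, card_insert_of_notMem (by simpa), card_singleton])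
    exact hnotE (this ▸ he)
  refine ⟨∑ e ∈ E.filter (i ∈ ·), ∏ m ∈ e.erase i, x m,
      ∑ e ∈ E.filter (fun e => i ∉ e ∧ j ∈ e), ∏ m ∈ e.erase j, x m,
      ∑ e ∈ E.filter (fun e => i ∉ e ∧ j ∉ e), ∏ m ∈ e, x m, ?_⟩
  intro u hu
  have key : ∀ (e : Finset (Fin n)), e ∈ E → i ∉ e → j ∉ e → ∏ m ∈ e, u m = ∏ m ∈ e, x m := by
    intro e he hi hj
    exact prod_congr rfl fun m hm => hu m (fun h => hi (h ▸ hm)) (fun h => hj (h ▸ hm))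
  rw [← sum_filter_add_sum_filter_not E (i ∈ ·),
    ← sum_filter_add_sum_filter_not (E.filter (fun e => ¬ i ∈ e)) (j ∈ ·), filter_filter, filter_filter]
  have h1 : ∑ e ∈ E.filter (i ∈ ·), ∏ m ∈ e, u m
      = u i * ∑ e ∈ E.filter (i ∈ ·), ∏ m ∈ e.erase i, x m := by
    rw [mul_sum]
    refine sum_congr rfl fun e he => ?_
    simp only [mem_filter] at he
    rw [← mul_prod_erase e u he.2]
    congr 1
    refine prod_congr rfl fun m hm => ?_
    have hmi : m ≠ i := (mem_erase.1 hm).1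
    have hmj : m ≠ j := fun h => hboth e he.1 he.2 (h ▸ (mem_erase.1 hm).2)
    exact hu m hmi hmj
  have h2 : ∑ e ∈ E.filter (fun e => ¬ i ∈ e ∧ j ∈ e), ∏ m ∈ e, u m
      = u j * ∑ e ∈ E.filter (fun e => i ∉ e ∧ j ∈ e), ∏ m ∈ e.erase j, x m := by
    rw [mul_sum]
    refine sum_congr rfl fun e he => ?_
    simp only [mem_filter] at he
    rw [← mul_prod_erase e u he.2.2]
    congr 1
    refine prod_congr rfl fun m hm => ?_
    exact hu m (fun h => he.2.1 (h ▸ (mem_erase.1 hm).2)) (mem_erase.1 hm).1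
  have h3 : ∑ e ∈ E.filter (fun e => ¬ i ∈ e ∧ ¬ j ∈ e), ∏ m ∈ e, u m
      = ∑ e ∈ E.filter (fun e => i ∉ e ∧ j ∉ e), ∏ m ∈ e, x m := by
    refine sum_congr rfl fun e he => ?_
    simp only [mem_filter] at he
    exact key e he.1 he.2.1 he.2.2
  rw [h1, h2, h3]; ring

lemma sum_shift {n : ℕ} (x : Fin n → ℝ) {i j : Fin n} (hij : i ≠ j) :
    ∑ m, Function.update (Function.update x i (x i + x j)) j 0 m = ∑ m, x m := by
  rw [Finset.sum_update_of_mem (mem_univ j)]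
  rw [Finset.sum_update_of_mem (by simp [hij] : i ∈ univ \ {j})]
  have h1 : (univ \ {j}) \ {i} = (univ.erase i).erase j := by
    ext m; simp [and_comm]
  rw [h1]
  have hx : ∑ m, x m = x i + (x j + ∑ m ∈ (univ.erase i).erase j, x m) := by
    rw [← Finset.add_sum_erase _ _ (mem_univ i),
      ← Finset.add_sum_erase _ _ (by simp [hij.symm] : j ∈ univ.erase i)]
  rw [hx]; ring

lemma MSupper {n t : ℕ} (ht : 1 ≤ t) (E : Finset (Finset (Fin n)))
    (hE : ∀ e ∈ E, e.card = 2)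
    (hmax : ∀ W : Finset (Fin n), W.powersetCard 2 ⊆ E → W.card ≤ t) :
    ∀ k (x : Fin n → ℝ), (∀ i, 0 ≤ x i) → ∑ i, x i = 1 →
      (univ.filter fun i => x i ≠ 0).card ≤ k →
      ∑ e ∈ E, ∏ m ∈ e, x m ≤ 1 / 2 * (1 - 1 / (t : ℝ)) := by
  classical
  have htR : (0 : ℝ) < t := by exact_mod_cast ht
  intro k
  induction k with
  | zero =>
    intro x hx hs hc
    exfalso
    have hall : ∀ i, x i = 0 := by
      intro i
      by_contra h
      have : i ∈ univ.filter fun i => x i ≠ 0 := by simp [h]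
      simpa using card_pos.2 ⟨i, this⟩ |>.trans_le hc
    simp [hall] at hs
  | succ k ih =>
    intro x hx hs hc
    set s := univ.filter fun i => x i ≠ 0 with hsdef
    by_cases hcl : s.powersetCard 2 ⊆ E
    · -- clique case
      have hst : s.card ≤ t := hmax s hcl
      have hs1 : ∑ i ∈ s, x i = 1 := by
        rw [← hs]
        apply sum_subset (filter_subset _ _)
        intro i _ hi
        simp only [hsdef, mem_filter, mem_univ, true_and, not_not] at hi
        exact hi
      have hzero : ∑ e ∈ E.filter (fun e => ¬ e ⊆ s), ∏ m ∈ e, x m = 0 := by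
        refine sum_eq_zero fun e he => ?_
        simp only [mem_filter, not_subset] at he
        obtain ⟨m, hme, hms⟩ := he.2
        exact prod_eq_zero hme (by simpa [hsdef] using hms)
      have hsplit : ∑ e ∈ E, ∏ m ∈ e, x m
          = ∑ e ∈ E.filter (fun e => e ⊆ s), ∏ m ∈ e, x m := by
        rw [← sum_filter_add_sum_filter_not E (fun e => e ⊆ s), hzero, add_zero]
      have hsub : E.filter (fun e => e ⊆ s) ⊆ s.powersetCard 2 := by
        intro e he
        simp only [mem_filter] at he
        exact mem_powersetCard.2 ⟨he.2, hE e he.1⟩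
      have hle : ∑ e ∈ E, ∏ m ∈ e, x m ≤ ∑ e ∈ s.powersetCard 2, ∏ m ∈ e, x m := by
        rw [hsplit]
        exact sum_le_sum_of_subset_of_nonneg hsub
          (fun e _ _ => prod_nonneg fun m _ => hx m)
      have hps := pairSum s x
      rw [hs1] at hps
      have hcs : (1:ℝ) ≤ s.card * ∑ i ∈ s, (x i)^2 := by
        have := sq_sum_le_card_mul_sum_sq (s := s) (f := x)
        rw [hs1] at this; simpa using this
      have hsq : (1:ℝ)/t ≤ ∑ i ∈ s, (x i)^2 := by
        have hsq0 : (0:ℝ) ≤ ∑ i ∈ s, (x i)^2 := sum_nonneg fun i _ => sq_nonneg _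
        have hct : (s.card : ℝ) ≤ t := by exact_mod_cast hst
        have : (1:ℝ) ≤ t * ∑ i ∈ s, (x i)^2 :=
          hcs.trans (mul_le_mul_of_nonneg_right hct hsq0)
        rw [div_le_iff₀ htR]; linarith
      linarith
    · -- non-clique case
      rw [not_subset] at hcl
      obtain ⟨e₀, he₀, he₀E⟩ := hcl
      rw [mem_powersetCard] at he₀
      obtain ⟨i, j, hij, rfl⟩ := card_eq_two.1 he₀.2
      have his : i ∈ s := he₀.1 (by simp)
      have hjs : j ∈ s := he₀.1 (by simp)
      have hxi : x i ≠ 0 := by simpa [hsdef] using his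
      have hxj : x j ≠ 0 := by simpa [hsdef] using hjs
      obtain ⟨A, B, C, hABC⟩ := decomp E hE hij he₀E x
      set y := Function.update (Function.update x i (x i + x j)) j 0 with hydef
      set z := Function.update (Function.update x j (x i + x j)) i 0 with hzdef
      have hyi : y i = x i + x j := by
        rw [hydef, Function.update_of_ne hij, Function.update_self]
      have hyj : y j = 0 := by rw [hydef, Function.update_self]
      have hzi : z i = 0 := by rw [hzdef, Function.update_self]
      have hzj : z j = x i + x j := by
        rw [hzdef, Function.update_of_ne hij.symm, Function.update_self]
      have hyoff : ∀ m, m ≠ i → m ≠ j → y m = x m := by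
        intro m hmi hmj
        rw [hydef, Function.update_of_ne hmj, Function.update_of_ne hmi]
      have hzoff : ∀ m, m ≠ i → m ≠ j → z m = x m := by
        intro m hmi hmj
        rw [hzdef, Function.update_of_ne hmi, Function.update_of_ne hmj]
      -- y, z in simplex
      have hynn : ∀ m, 0 ≤ y m := by
        intro m
        rcases eq_or_ne m i with rfl | hmi
        · rw [hyi]; exact add_nonneg (hx _) (hx _)
        rcases eq_or_ne m j with rfl | hmj
        · rw [hyj]
        · rw [hyoff m hmi hmj]; exact hx m
      have hznn : ∀ m, 0 ≤ z m := by
        intro m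
        rcases eq_or_ne m i with rfl | hmi
        · rw [hzi]
        rcases eq_or_ne m j with rfl | hmj
        · rw [hzj]; exact add_nonneg (hx _) (hx _)
        · rw [hzoff m hmi hmj]; exact hx m
      have hysum : ∑ m, y m = 1 := by rw [hydef, sum_shift x hij, hs]
      have hzsum : ∑ m, z m = 1 := by
        rw [hzdef]
        have := sum_shift x hij.symm
        rw [hs] at this
        rw [← this]
        exact sum_congr rfl fun m _ => by ring_nf
      -- support bounds
      have hscard : s.card ≤ k + 1 := hc
      have hycard : (univ.filter fun m => y m ≠ 0).card ≤ k := by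
        have hsubs : (univ.filter fun m => y m ≠ 0) ⊆ s.erase j := by
          intro m hm
          simp only [mem_filter, mem_univ, true_and] at hm
          rcases eq_or_ne m j with rfl | hmj
          · exact absurd hyj hm
          rcases eq_or_ne m i with rfl | hmi
          · exact mem_erase.2 ⟨hij, his⟩
          · exact mem_erase.2 ⟨hmj, by simp [hsdef, ← hyoff m hmi hmj, hm]⟩
        calc (univ.filter fun m => y m ≠ 0).card ≤ (s.erase j).card := card_le_card hsubs
          _ = s.card - 1 := card_erase_of_mem hjs
          _ ≤ k := by omega
      have hzcard : (univ.filter fun m => z m ≠ 0).card ≤ k := by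
        have hsubs : (univ.filter fun m => z m ≠ 0) ⊆ s.erase i := by
          intro m hm
          simp only [mem_filter, mem_univ, true_and] at hm
          rcases eq_or_ne m i with rfl | hmi
          · exact absurd hzi hm
          rcases eq_or_ne m j with rfl | hmj
          · exact mem_erase.2 ⟨hij.symm, hjs⟩
          · exact mem_erase.2 ⟨hmi, by simp [hsdef, ← hzoff m hmi hmj, hm]⟩
        calc (univ.filter fun m => z m ≠ 0).card ≤ (s.erase i).card := card_le_card hsubs
          _ = s.card - 1 := card_erase_of_mem his
          _ ≤ k := by omega
      have hy := ih y hynn hysum hycard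
      have hz := ih z hznn hzsum hzcard
      have hfx := hABC x (fun m _ _ => rfl)
      have hfy := hABC y hyoff
      have hfz := hABC z hzoff
      rw [hyi, hyj] at hfy
      rw [hzi, hzj] at hfz
      rcases le_total A B with hAB | hAB
      · -- move to z
        have : ∑ e ∈ E, ∏ m ∈ e, x m ≤ ∑ e ∈ E, ∏ m ∈ e, z m := by
          rw [hfx, hfz]
          nlinarith [hx i, hx j]
        linarith
      · have : ∑ e ∈ E, ∏ m ∈ e, x m ≤ ∑ e ∈ E, ∏ m ∈ e, y m := by
          rw [hfx, hfy]
          nlinarith [hx i, hx j]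
        linarith

/-- The uniform weighting on a fixed maximum clique `K` achieves the
Motzkin–Straus maximum `(1/2)(1 - 1/t)`. -/
theorem stmt_2 (n t : ℕ) (ht : 1 ≤ t) (E : Finset (Finset (Fin n)))
    (hE : ∀ e ∈ E, e.card = 2)
    (K : Finset (Fin n)) (hK : K.card = t) (hKcl : K.powersetCard 2 ⊆ E)
    (hmax : ∀ W : Finset (Fin n), W.powersetCard 2 ⊆ E → W.card ≤ t) :
    (∑ e ∈ E, ∏ i ∈ e, (fun i => if i ∈ K then (1 : ℝ) / t else 0) i
        = 1 / 2 * (1 - 1 / (t : ℝ))) ∧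
    (∀ x ∈ stdSimplex' n, (∑ e ∈ E, ∏ i ∈ e, x i) ≤ 1 / 2 * (1 - 1 / (t : ℝ))) := by
  classical
  have htR : (0 : ℝ) < t := by exact_mod_cast ht
  constructor
  · set u : Fin n → ℝ := fun i => if i ∈ K then (1 : ℝ) / t else 0 with hudef
    have hzero : ∑ e ∈ E.filter (fun e => ¬ e ⊆ K), ∏ m ∈ e, u m = 0 := by
      refine sum_eq_zero fun e he => ?_
      simp only [mem_filter, not_subset] at he
      obtain ⟨m, hme, hmK⟩ := he.2
      exact prod_eq_zero hme (by simp [hudef, hmK])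
    have hsplit : ∑ e ∈ E, ∏ m ∈ e, u m
        = ∑ e ∈ E.filter (fun e => e ⊆ K), ∏ m ∈ e, u m := by
      rw [← sum_filter_add_sum_filter_not E (fun e => e ⊆ K), hzero, add_zero]
    have hset : E.filter (fun e => e ⊆ K) = K.powersetCard 2 := by
      ext e
      simp only [mem_filter, mem_powersetCard]
      exact ⟨fun h => ⟨h.2, hE e h.1⟩, fun h => ⟨hKcl (mem_powersetCard.2 h), h.1⟩⟩
    have hterm : ∀ e ∈ K.powersetCard 2, ∏ m ∈ e, u m = (1 / (t:ℝ))^2 := by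
      intro e he
      rw [mem_powersetCard] at he
      calc ∏ m ∈ e, u m = ∏ m ∈ e, (1 / (t:ℝ)) :=
            prod_congr rfl fun m hm => by simp [hudef, he.1 hm]
        _ = (1 / (t:ℝ))^2 := by rw [prod_const, he.2]
    rw [hsplit, hset, sum_congr rfl hterm, sum_const, card_powersetCard, hK,
      nsmul_eq_mul, Nat.cast_choose_two]
    field_simp
  · intro x hx
    obtain ⟨hx0, hx1⟩ := hx
    exact MSupper ht E hE hmax _ x hx0 hx1 le_rfl
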